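/- arXiv:1808.04808 — 5 statements merged into one kernel-verified Lean document; each statement's English description precedes it below -/
import Mathlib

section
/- Let A be a ring, B a subring, and suppose A is a separable extension of B. If π: A → B is a surjective ring homomorphism that splits the inclusion B ↪ A (i.e., π restricted to B is the identity), and I = ker π, then I² = I. -/
open scoped TensorProduct

section SepPrelude

variable {A : Type*} [Ring A]

/-- Relations defining `A ⊗_B A` as a quotient of `A ⊗_ℤ A`. -/
def sepRel (B : Subring A) : Submodule ℤ (TensorProduct ℤ A A) :=
  Submodule.span ℤ
    {z | ∃ (x y : A) (b : B), z = (x * (b : A)) ⊗ₜ[ℤ] y - x ⊗ₜ[ℤ] ((b : A) * y)}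

/-- The tensor product `A ⊗_B A` of `A` with itself over the subring `B`. -/
abbrev TensorOverSub (B : Subring A) : Type _ := TensorProduct ℤ A A ⧸ sepRel B

/-- The basic tensor `x ⊗_B y`. -/
noncomputable def tmulB (B : Subring A) (x y : A) : TensorOverSub B :=
  Submodule.Quotient.mk (x ⊗ₜ[ℤ] y)

/-- Left multiplication `a • (x ⊗ y) = (a*x) ⊗ y` on `A ⊗_B A`. -/
noncomputable def lmulB (B : Subring A) (a : A) :
    TensorOverSub B →ₗ[ℤ] TensorOverSub B :=
  Submodule.mapQ _ _ (LinearMap.rTensor A (LinearMap.mulLeft ℤ a)) (by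
    refine Submodule.span_le.mpr ?_
    rintro _ ⟨x, y, b, rfl⟩
    simp only [SetLike.mem_coe, Submodule.mem_comap, map_sub, LinearMap.rTensor_tmul,
      LinearMap.mulLeft_apply]
    exact Submodule.subset_span ⟨a * x, y, b, by
      show LinearMap.rTensor A (LinearMap.mulLeft ℤ a)
        ((x * (b : A)) ⊗ₜ[ℤ] y - x ⊗ₜ[ℤ] ((b : A) * y)) = _
      rw [map_sub, LinearMap.rTensor_tmul, LinearMap.rTensor_tmul]
      simp [mul_assoc]⟩)

/-- Right multiplication `(x ⊗ y) • a = x ⊗ (y*a)` on `A ⊗_B A`. -/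
noncomputable def rmulB (B : Subring A) (a : A) :
    TensorOverSub B →ₗ[ℤ] TensorOverSub B :=
  Submodule.mapQ _ _ (LinearMap.lTensor A (LinearMap.mulRight ℤ a)) (by
    refine Submodule.span_le.mpr ?_
    rintro _ ⟨x, y, b, rfl⟩
    simp only [SetLike.mem_coe, Submodule.mem_comap, map_sub, LinearMap.lTensor_tmul,
      LinearMap.mulRight_apply]
    exact Submodule.subset_span ⟨x, y * a, b, by
      show LinearMap.lTensor A (LinearMap.mulRight ℤ a)
        ((x * (b : A)) ⊗ₜ[ℤ] y - x ⊗ₜ[ℤ] ((b : A) * y)) = _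
      rw [map_sub, LinearMap.lTensor_tmul, LinearMap.lTensor_tmul]
      simp [mul_assoc]⟩)

/-- The multiplication map `μ : A ⊗_B A → A`. -/
noncomputable def mulMapB (B : Subring A) : TensorOverSub B →ₗ[ℤ] A :=
  Submodule.liftQ _ (LinearMap.mul' ℤ A) (by
    refine Submodule.span_le.mpr ?_
    rintro _ ⟨x, y, b, rfl⟩
    show LinearMap.mul' ℤ A ((x * (b : A)) ⊗ₜ[ℤ] y - x ⊗ₜ[ℤ] ((b : A) * y)) = 0
    rw [map_sub, LinearMap.mul'_apply, LinearMap.mul'_apply, mul_assoc, sub_self])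

/-- `A` is a separable extension of `B`: there is a separability element in `A ⊗_B A`. -/
def IsSepExt (B : Subring A) : Prop :=
  ∃ e : TensorOverSub B, (∀ a : A, lmulB B a e = rmulB B a e) ∧ mulMapB B e = 1

end SepPrelude

section Aux

variable {A : Type*} [Ring A] (B : Subring A) (π : A →+* B)

/-- The bilinear map `(x, y) ↦ π(x)·(y - π(y)) mod I²`. -/
noncomputable def sepDzero :
    TensorProduct ℤ A A →ₗ[ℤ] A ⧸ (RingHom.ker π * RingHom.ker π) :=
  TensorProduct.lift (LinearMap.mk₂ ℤ
    (fun x y => Submodule.Quotient.mk ((π x : A) * (y - (π y : A))))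
    (fun x x' y => by
      rw [← Submodule.Quotient.mk_add]
      exact congrArg _ (by push_cast [map_add]; noncomm_ring))
    (fun n x y => by
      rw [← Submodule.Quotient.mk_smul]
      exact congrArg _ (by push_cast [map_zsmul]; rw [smul_mul_assoc]))
    (fun x y y' => by
      rw [← Submodule.Quotient.mk_add]
      exact congrArg _ (by push_cast [map_add]; noncomm_ring))
    (fun n x y => by
      rw [← Submodule.Quotient.mk_smul]
      exact congrArg _ (by push_cast [map_zsmul]; rw [← smul_sub, mul_smul_comm])))

@[simp] lemma sepDzero_tmul (x y : A) :
    sepDzero B π (x ⊗ₜ[ℤ] y) = Submodule.Quotient.mk ((π x : A) * (y - (π y : A))) := rfl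

/-- `sepDzero` descends to `A ⊗_B A`. -/
noncomputable def sepD (hsplit : ∀ b : B, π (b : A) = b) :
    TensorOverSub B →ₗ[ℤ] A ⧸ (RingHom.ker π * RingHom.ker π) :=
  Submodule.liftQ _ (sepDzero B π) (by
    refine Submodule.span_le.mpr ?_
    rintro _ ⟨x, y, b, rfl⟩
    simp only [SetLike.mem_coe, LinearMap.mem_ker, map_sub, sepDzero_tmul, map_mul,
      hsplit b]
    rw [sub_eq_zero]
    exact congrArg _ (by push_cast; noncomm_ring))

end Aux

section KeyLemmas

variable {A : Type*} [Ring A] (B : Subring A) (π : A →+* B)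
  (hsplit : ∀ b : B, π (b : A) = b)

lemma sepD_comp_lmul (a : A) (ha : π a = 0) :
    (sepD B π hsplit).comp (lmulB B a) = 0 := by
  apply Submodule.linearMap_qext
  apply TensorProduct.ext'
  intro x y
  simp only [LinearMap.comp_apply, Submodule.mkQ_apply, LinearMap.zero_apply,
    lmulB, Submodule.mapQ_apply, LinearMap.rTensor_tmul, LinearMap.mulLeft_apply,
    sepD, Submodule.liftQ_apply, sepDzero_tmul]
  show (Submodule.Quotient.mk ((π (a * x) : A) * (y - (π y : A))) :
    A ⧸ (RingHom.ker π * RingHom.ker π)) = 0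
  rw [map_mul, ha, zero_mul]
  push_cast
  rw [zero_mul, Submodule.Quotient.mk_eq_zero]
  exact Submodule.zero_mem _

lemma sepD_comp_rmul (a : A) (ha : π a = 0) :
    (sepD B π hsplit).comp (rmulB B a) =
      (((RingHom.ker π * RingHom.ker π).mkQ.restrictScalars ℤ).comp
        (LinearMap.mulRight ℤ a)).comp (mulMapB B) := by
  apply Submodule.linearMap_qext
  apply TensorProduct.ext'
  intro x y
  simp only [LinearMap.comp_apply, Submodule.mkQ_apply, LinearMap.restrictScalars_apply,
    rmulB, Submodule.mapQ_apply, LinearMap.lTensor_tmul, LinearMap.mulRight_apply,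
    sepD, Submodule.liftQ_apply, sepDzero_tmul, mulMapB, LinearMap.mul'_apply]
  show (Submodule.Quotient.mk ((π x : A) * (y * a - (π (y * a) : A))) :
    A ⧸ (RingHom.ker π * RingHom.ker π)) = Submodule.Quotient.mk (x * y * a)
  rw [map_mul, ha, mul_zero]
  push_cast
  rw [sub_zero, Submodule.Quotient.eq]
  have hmem1 : (π x : A) - x ∈ RingHom.ker π := by
    rw [RingHom.mem_ker, map_sub, hsplit, sub_self]
  have hmem2 : y * a ∈ RingHom.ker π := by
    rw [RingHom.mem_ker, map_mul, ha, mul_zero]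
  have : (π x : A) * (y * a) - x * y * a = ((π x : A) - x) * (y * a) := by noncomm_ring
  rw [this]
  exact Ideal.mul_mem_mul hmem1 hmem2

end KeyLemmas

/-- If `A` is separable over `B` and `π : A → B` is a surjective ring
homomorphism splitting the inclusion `B ↪ A`, then `I² = I` for `I = ker π`. -/
theorem ker_sq_eq_ker_of_separable_split {A : Type*} [Ring A] (B : Subring A)
    (π : A →+* B) (hπ : Function.Surjective π) (hsplit : ∀ b : B, π (b : A) = b)
    (hsep : IsSepExt B) :
    RingHom.ker π * RingHom.ker π = RingHom.ker π := by
  refine le_antisymm (Ideal.mul_le.mpr fun r hr s hs => ?_) fun a ha => ?_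
  · rw [RingHom.mem_ker] at hr ⊢
    rw [map_mul, hr, zero_mul]
  · obtain ⟨e, he, hmu⟩ := hsep
    rw [RingHom.mem_ker] at ha
    have e1 := LinearMap.congr_fun (sepD_comp_lmul B π hsplit a ha) e
    have e2 := LinearMap.congr_fun (sepD_comp_rmul B π hsplit a ha) e
    simp only [LinearMap.comp_apply, LinearMap.zero_apply, LinearMap.restrictScalars_apply,
      LinearMap.mulRight_apply, Submodule.mkQ_apply, hmu, one_mul] at e1 e2
    rw [he a, e2] at e1
    exact (Submodule.Quotient.mk_eq_zero _).mp e1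
end

section
/- Let B ⊆ A be a ring extension. If A has depth 1 over B, i.e., there exist B-B-bimodule maps f_i: A → B and elements r_i ∈ A^B (the centralizer of B in A) such that a = Σ_i f_i(a)·r_i for all a ∈ A, then A is ring isomorphic to B ⊗_{Z(B)} A^B. -/
set_option maxHeartbeats 1000000
set_option synthInstance.maxHeartbeats 400000


open scoped TensorProduct

section

variable {A : Type*} [Ring A] (B : Subring A)

/-- `B` is an algebra over its center `Z(B)`. -/
noncomputable instance centerAlgebraSelf : Algebra (Subring.center B) B :=
  RingHom.toAlgebra' (SubringClass.subtype _)
    (fun c x => (Subring.mem_center_iff.mp c.2 x).symm)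

/-- The inclusion of `Z(B)` into the centralizer `A^B`. -/
def centerToCentralizer : Subring.center B →+* Subring.centralizer (B : Set A) where
  toFun c := ⟨((c : B) : A), by
    intro g hg
    exact congrArg Subtype.val (Subring.mem_center_iff.mp c.2 ⟨g, hg⟩)⟩
  map_one' := rfl
  map_mul' _ _ := rfl
  map_zero' := rfl
  map_add' _ _ := rfl

/-- The centralizer `A^B` is an algebra over `Z(B)`. -/
noncomputable instance centerAlgebraCentralizer :
    Algebra (Subring.center B) (Subring.centralizer (B : Set A)) :=
  RingHom.toAlgebra' (centerToCentralizer B)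
    (fun c x => by
      have hc : ((c : B) : A) ∈ (B : Set A) := (c : B).2
      exact Subtype.ext (x.2 _ hc))

/-- If `B ⊆ A` has depth 1 (central projectivity: `a = Σᵢ fᵢ(a)·rᵢ`
with `fᵢ` `B`-`B`-bimodule maps `A → B` and `rᵢ ∈ A^B`), then
`A ≅ B ⊗_{Z(B)} A^B` as rings, via `b ⊗ r ↦ b·r`. -/
theorem depth_one_tensor_decomposition
    (n : ℕ) (f : Fin n → (A →+ B))
    (hf : ∀ i, ∀ (b : B) (a : A),
      f i ((b : A) * a) = b * f i a ∧ f i (a * (b : A)) = f i a * b)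
    (r : Fin n → A) (hr : ∀ i, r i ∈ Subring.centralizer (B : Set A))
    (hd : ∀ a : A, a = ∑ i, ((f i a : A) * r i)) :
    ∃ φ : (B ⊗[Subring.center B] Subring.centralizer (B : Set A)) ≃+* A,
      ∀ (b : B) (c : Subring.centralizer (B : Set A)),
        φ (b ⊗ₜ c) = (b : A) * (c : A) := by

  classical
  -- notation
  set Z := Subring.center B with hZ
  set C := Subring.centralizer (B : Set A) with hC
  have hcomm : ∀ (c : C) (b : B), (b : A) * (c : A) = (c : A) * (b : A) :=
    fun c b => c.2 b b.2
  -- the bilinear map (b, c) ↦ b * c as an AddMonoidHom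
  let F : B →+ C →+ A :=
    { toFun := fun b =>
        { toFun := fun c => (b : A) * (c : A)
          map_zero' := by simp
          map_add' := fun c c' => by
            show (b : A) * ((c : A) + (c' : A)) = _
            rw [mul_add] }
      map_zero' := by ext c; simp
      map_add' := fun b b' => by
        ext c
        show ((b : A) + (b' : A)) * (c : A) = _
        rw [add_mul]; rfl }
  have hbal : ∀ (z : Z) (b : B) (c : C), F (z • b) c = F b (z • c) := by
    intro z b c
    have h1 : ((z • b : B) : A) = ((z : B) : A) * (b : A) := rfl
    have h2 : ((z • c : C) : A) = ((z : B) : A) * (c : A) := rfl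
    show ((z • b : B) : A) * (c : A) = (b : A) * ((z • c : C) : A)
    rw [h1, h2]
    have hzb : (b : B) * (z : B) = (z : B) * (b : B) :=
      Subring.mem_center_iff.mp z.2 b
    have hzb' : (b : A) * ((z : B) : A) = ((z : B) : A) * (b : A) :=
      congrArg Subtype.val hzb
    rw [← mul_assoc, ← hzb', mul_assoc]
  let μ : (B ⊗[Z] C) →+ A := TensorProduct.liftAddHom F hbal
  have hμtmul : ∀ (b : B) (c : C), μ (b ⊗ₜ c) = (b : A) * (c : A) :=
    fun b c => TensorProduct.liftAddHom_tmul F hbal b c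
  -- the inverse map
  let ν : A →+ (B ⊗[Z] C) :=
    { toFun := fun a => ∑ i, (f i a) ⊗ₜ[Z] (⟨r i, hr i⟩ : C)
      map_zero' := by simp
      map_add' := fun a a' => by
        simp only [map_add, TensorProduct.add_tmul]
        rw [Finset.sum_add_distrib] }
  have hright : ∀ a : A, μ (ν a) = a := by
    intro a
    show μ (∑ i, (f i a) ⊗ₜ[Z] (⟨r i, hr i⟩ : C)) = a
    rw [map_sum]
    simp only [hμtmul]
    exact (hd a).symm
  have hleft : ∀ x : B ⊗[Z] C, ν (μ x) = x := by
    intro x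
    induction x with
    | zero => simp
    | add x y hx hy => rw [map_add, map_add, hx, hy]
    | tmul b c =>
      rw [hμtmul]
      show ∑ i, (f i ((b : A) * (c : A))) ⊗ₜ[Z] (⟨r i, hr i⟩ : C) = b ⊗ₜ c
      have hfc : ∀ i, f i ((b : A) * (c : A)) = b * f i (c : A) :=
        fun i => (hf i b (c : A)).1
      have hcent : ∀ i, f i (c : A) ∈ Z := by
        intro i
        rw [Subring.mem_center_iff]
        intro g
        have : (g : A) * (c : A) = (c : A) * (g : A) := c.2 g g.2
        have h1 : f i ((g : A) * (c : A)) = g * f i (c : A) := (hf i g (c : A)).1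
        have h2 : f i ((c : A) * (g : A)) = f i (c : A) * g := (hf i g (c : A)).2
        rw [this, h2] at h1
        exact h1.symm
      calc ∑ i, (f i ((b : A) * (c : A))) ⊗ₜ[Z] (⟨r i, hr i⟩ : C)
          = ∑ i, b ⊗ₜ[Z] ((⟨f i (c : A), hcent i⟩ : Z) • (⟨r i, hr i⟩ : C)) := by
            refine Finset.sum_congr rfl fun i _ => ?_
            rw [hfc i, ← TensorProduct.smul_tmul]
            congr 1
            ext
            show ((b : A)) * (f i (c : A) : A) = (f i (c : A) : A) * (b : A)
            exact congrArg Subtype.val (Subring.mem_center_iff.mp (hcent i) b)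
        _ = b ⊗ₜ[Z] (∑ i, (⟨f i (c : A), hcent i⟩ : Z) • (⟨r i, hr i⟩ : C)) := by
            rw [TensorProduct.tmul_sum]
        _ = b ⊗ₜ c := by
            congr 1
            refine Subtype.ext ?_
            rw [AddSubmonoidClass.coe_finset_sum]
            exact (hd (c : A)).symm
  -- multiplicativity
  have hmul : ∀ x y : B ⊗[Z] C, μ (x * y) = μ x * μ y := by
    intro x y
    induction x with
    | zero => simp
    | add x x' hx hx' => rw [add_mul, map_add, map_add, hx, hx', add_mul]
    | tmul b c =>
      induction y with
      | zero => simp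
      | add y y' hy hy' => rw [mul_add, map_add, map_add, hy, hy', mul_add]
      | tmul b' c' =>
        rw [Algebra.TensorProduct.tmul_mul_tmul, hμtmul, hμtmul, hμtmul]
        show ((b : A) * (b' : A)) * ((c : A) * (c' : A)) = _
        rw [mul_assoc, ← mul_assoc (b' : A), hcomm c b', mul_assoc, ← mul_assoc,
          ← mul_assoc]
  refine ⟨{ toFun := μ, invFun := ν, left_inv := hleft, right_inv := hright,
            map_mul' := hmul, map_add' := μ.map_add }, ?_⟩
  intro b c
  exact hμtmul b c
end
end

section
/- If B ⊆ A is a centrally projective (depth 1) ring extension, then Z(B) ⊆ Z(A). -/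
/-- If `B ⊆ A` is centrally projective (depth 1), i.e. there are
`B`-`B`-bimodule maps `fᵢ : A → B` and elements `rᵢ ∈ A^B` with
`a = Σᵢ fᵢ(a)·rᵢ`, then `Z(B) ⊆ Z(A)`. -/
theorem center_le_center_of_depth_one {A : Type*} [Ring A] (B : Subring A)
    (n : ℕ) (f : Fin n → (A →+ B))
    (hf : ∀ i, ∀ (b : B) (a : A),
      f i ((b : A) * a) = b * f i a ∧ f i (a * (b : A)) = f i a * b)
    (r : Fin n → A) (hr : ∀ i, r i ∈ Subring.centralizer (B : Set A))
    (hd : ∀ a : A, a = ∑ i, ((f i a : A) * r i)) :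
    ∀ z : B, z ∈ Subring.center B → (z : A) ∈ Subring.center A := by
  intro z hz
  rw [Subring.mem_center_iff] at hz ⊢
  intro a
  have hr' : ∀ i, (z : A) * r i = r i * (z : A) := fun i =>
    Subring.mem_centralizer_iff.mp (hr i) (z : A) z.2
  calc a * (z : A) = ∑ i, ((f i (a * (z : A)) : A) * r i) := hd _
    _ = ∑ i, ((f i a : A) * (z : A) * r i) := by
        refine Finset.sum_congr rfl fun i _ => ?_
        rw [(hf i z a).2]; push_cast; ring
    _ = ∑ i, ((z : A) * (f i a : A) * r i) := by
        refine Finset.sum_congr rfl fun i _ => ?_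
        have h2 : (f i a : A) * (z : A) = (z : A) * (f i a : A) := by
          exact_mod_cast congrArg (Subtype.val) (hz (f i a))
        rw [h2]
    _ = ∑ i, ((z : A) * ((f i a : A) * r i)) := by simp [mul_assoc]
    _ = (z : A) * ∑ i, ((f i a : A) * r i) := by rw [Finset.mul_sum]
    _ = (z : A) * a := by rw [← hd a]
end

section
/- A split ring extension R ⊇ S has depth 1 (is centrally projective) if and only if there exists an S-S-bimodule projection E: R → S that is a full idempotent in the ring U = End_{S-S}(R). -/
section UPrelude

variable {R : Type*} [Ring R]

/-- The ring `U = End_{S-S}(R)` of `S`-`S`-bimodule endomorphisms of `R`, as a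
subring of the ring of `ℤ`-linear (i.e. additive) endomorphisms of `R`. -/
def bimodEnd (S : Subring R) : Subring (Module.End ℤ R) where
  carrier := {F | ∀ s ∈ S, ∀ r : R, F (s * r) = s * F r ∧ F (r * s) = F r * s}
  one_mem' := by intro s hs r; exact ⟨rfl, rfl⟩
  mul_mem' := by
    intro F G hF hG s hs r
    constructor
    · show F (G (s * r)) = s * F (G r)
      rw [(hG s hs r).1, (hF s hs (G r)).1]
    · show F (G (r * s)) = F (G r) * s
      rw [(hG s hs r).2, (hF s hs (G r)).2]
  zero_mem' := by intro s hs r; simp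
  add_mem' := by
    intro F G hF hG s hs r
    constructor
    · show F (s * r) + G (s * r) = s * (F r + G r)
      rw [(hF s hs r).1, (hG s hs r).1, mul_add]
    · show F (r * s) + G (r * s) = (F r + G r) * s
      rw [(hF s hs r).2, (hG s hs r).2, add_mul]
  neg_mem' := by
    intro F hF s hs r
    constructor
    · show -(F (s * r)) = s * -(F r)
      rw [(hF s hs r).1, mul_neg]
    · show -(F (r * s)) = -(F r) * s
      rw [(hF s hs r).2, neg_mul]

end UPrelude

/-- A split ring extension `R ⊇ S` has depth 1 (is centrally
projective, i.e. `id_R = Σᵢ fᵢ ∘ gᵢ` with `fᵢ ∈ Hom_{S-S}(S,R)`,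
`gᵢ ∈ Hom_{S-S}(R,S)`) iff there is an `S`-`S`-bimodule projection `E : R → S`
that is a full idempotent in `U = End_{S-S}(R)`, i.e. `UEU = U`. -/
theorem depth_one_iff_full_projection {R : Type*} [Ring R] (S : Subring R)
    (hsplit : ∃ E : Module.End ℤ R, E ∈ bimodEnd S ∧ (∀ r : R, E r ∈ S) ∧
      (∀ s ∈ S, E s = s)) :
    (∃ (n : ℕ) (f : Fin n → (S →+ R)) (g : Fin n → (R →+ S)),
        (∀ i, ∀ (s x : S), f i (s * x) = (s : R) * f i x ∧
          f i (x * s) = f i x * (s : R)) ∧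
        (∀ i, ∀ (s : S) (r : R), g i ((s : R) * r) = s * g i r ∧
          g i (r * (s : R)) = g i r * s) ∧
        (∀ r : R, r = ∑ i, f i (g i r))) ↔
      (∃ E : Module.End ℤ R, E ∈ bimodEnd S ∧ (∀ r : R, E r ∈ S) ∧
        (∀ s ∈ S, E s = s) ∧
        AddSubgroup.closure
            {x : Module.End ℤ R | ∃ α ∈ bimodEnd S, ∃ β ∈ bimodEnd S,
              x = α * E * β} =
          (bimodEnd S).toAddSubgroup) := by
  obtain ⟨E0, hE0U, hE0S, hE0id⟩ := hsplit
  constructor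
  · rintro ⟨n, f, g, hf, hg, hsum⟩
    refine ⟨E0, hE0U, hE0S, hE0id, ?_⟩
    set T : Set (Module.End ℤ R) :=
      {x | ∃ α ∈ bimodEnd S, ∃ β ∈ bimodEnd S, x = α * E0 * β} with hT
    apply le_antisymm
    · rw [AddSubgroup.closure_le]
      rintro x ⟨α, hα, β, hβ, rfl⟩
      exact Subring.mem_toAddSubgroup.2 (mul_mem (mul_mem hα hE0U) hβ)
    · intro γ hγ
      rw [Subring.mem_toAddSubgroup] at hγ
      -- define α i and β i
      set A : Fin n → Module.End ℤ R := fun i =>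
        ((f i).comp (AddMonoidHom.mk' (fun r : R => (⟨E0 r, hE0S r⟩ : S))
          (by intro a b; ext; simp))).toIntLinearMap with hA
      set B : Fin n → Module.End ℤ R := fun i =>
        (AddMonoidHom.mk' (fun r : R => ((g i r : S) : R))
          (by intro a b; simp)).toIntLinearMap with hB
      have hAmem : ∀ i, A i ∈ bimodEnd S := by
        intro i s hs r
        constructor
        · show f i ⟨E0 (s * r), _⟩ = s * f i ⟨E0 r, _⟩
          have h1 : (⟨E0 (s * r), hE0S _⟩ : S) = ⟨s, hs⟩ * ⟨E0 r, hE0S r⟩ := by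
            ext; exact (hE0U s hs r).1
          rw [h1]; exact (hf i ⟨s, hs⟩ ⟨E0 r, hE0S r⟩).1
        · show f i ⟨E0 (r * s), _⟩ = f i ⟨E0 r, _⟩ * s
          have h1 : (⟨E0 (r * s), hE0S _⟩ : S) = ⟨E0 r, hE0S r⟩ * ⟨s, hs⟩ := by
            ext; exact (hE0U s hs r).2
          rw [h1]; exact (hf i ⟨s, hs⟩ ⟨E0 r, hE0S r⟩).2
      have hBmem : ∀ i, B i ∈ bimodEnd S := by
        intro i s hs r
        constructor
        · show ((g i (s * r) : S) : R) = s * ((g i r : S) : R)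
          rw [(hg i ⟨s, hs⟩ r).1]; rfl
        · show ((g i (r * s) : S) : R) = ((g i r : S) : R) * s
          rw [(hg i ⟨s, hs⟩ r).2]; rfl
      have key : γ = ∑ i, (γ * A i) * E0 * B i := by
        apply LinearMap.ext
        intro r
        rw [LinearMap.sum_apply]
        have : ∀ i, ((γ * A i) * E0 * B i) r = γ (f i (g i r)) := by
          intro i
          show γ (A i (E0 ((g i r : S) : R))) = γ (f i (g i r))
          rw [hE0id _ (g i r).2]
          show γ (f i ⟨E0 ((g i r : S) : R), _⟩) = γ (f i (g i r))
          congr 1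
          congr 1
          ext
          exact hE0id _ (g i r).2
        simp_rw [this]
        rw [← map_sum, ← hsum r]
      rw [key]
      apply AddSubgroup.sum_mem
      intro i _
      exact AddSubgroup.subset_closure
        ⟨γ * A i, mul_mem hγ (hAmem i), B i, hBmem i, rfl⟩
  · rintro ⟨E, hEU, hES, hEid, hclos⟩
    have h1 : (1 : Module.End ℤ R) ∈ AddSubgroup.closure
        {x : Module.End ℤ R | ∃ α ∈ bimodEnd S, ∃ β ∈ bimodEnd S,
          x = α * E * β} := by
      rw [hclos]; exact Subring.mem_toAddSubgroup.2 (one_mem _)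
    -- extract a list representation
    have hrep : ∃ l : List (Module.End ℤ R × Module.End ℤ R),
        (∀ p ∈ l, p.1 ∈ bimodEnd S ∧ p.2 ∈ bimodEnd S) ∧
        (1 : Module.End ℤ R) = (l.map (fun p => p.1 * E * p.2)).sum := by
      refine AddSubgroup.closure_induction ?_ ?_ ?_ ?_ h1
      · rintro x ⟨α, hα, β, hβ, rfl⟩
        exact ⟨[(α, β)], by rintro p hp; simp at hp; subst hp; exact ⟨hα, hβ⟩,
          by simp⟩
      · exact ⟨[], by simp, by simp⟩
      · rintro x y _ _ ⟨l1, hl1, hx⟩ ⟨l2, hl2, hy⟩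
        refine ⟨l1 ++ l2, ?_, ?_⟩
        · intro p hp
          rcases List.mem_append.1 hp with h | h
          · exact hl1 p h
          · exact hl2 p h
        · rw [List.map_append, List.sum_append, ← hx, ← hy]
      · rintro x _ ⟨l, hl, hx⟩
        refine ⟨l.map (fun p => (-p.1, p.2)), ?_, ?_⟩
        · intro p hp
          rcases List.mem_map.1 hp with ⟨q, hq, rfl⟩
          exact ⟨neg_mem (hl q hq).1, (hl q hq).2⟩
        · rw [List.map_map, hx]
          clear hx hl
          induction l with
          | nil => simp
          | cons a l ih =>
              simp only [List.map_cons, List.sum_cons, neg_add, ih, Function.comp_apply, neg_mul]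
    obtain ⟨l, hl, hone⟩ := hrep
    refine ⟨l.length, fun i => AddMonoidHom.mk' (fun x : S => (l.get i).1 (x : R))
      (by intro a b; simp), fun i => AddMonoidHom.mk'
      (fun r : R => (⟨E ((l.get i).2 r), hES _⟩ : S))
      (by intro a b; ext; simp), ?_, ?_, ?_⟩
    · intro i s x
      constructor
      · show (l.get i).1 ((s : R) * (x : R)) = (s : R) * (l.get i).1 (x : R)
        exact ((hl _ (l.get_mem i)).1 s s.2 x).1
      · show (l.get i).1 ((x : R) * (s : R)) = (l.get i).1 (x : R) * (s : R)
        exact ((hl _ (l.get_mem i)).1 s s.2 x).2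
    · intro i s r
      constructor
      · ext
        show E ((l.get i).2 ((s : R) * r)) = (s : R) * E ((l.get i).2 r)
        rw [((hl _ (l.get_mem i)).2 s s.2 r).1, (hEU s s.2 _).1]
      · ext
        show E ((l.get i).2 (r * (s : R))) = E ((l.get i).2 r) * (s : R)
        rw [((hl _ (l.get_mem i)).2 s s.2 r).2, (hEU s s.2 _).2]
    · intro r
      have h2 : (1 : Module.End ℤ R) r = r := rfl
      conv_lhs => rw [← h2, hone]
      have : ∀ (m : List (Module.End ℤ R × Module.End ℤ R)),
          ((m.map (fun p => p.1 * E * p.2)).sum) r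
            = (m.map (fun p => p.1 (E (p.2 r)))).sum := by
        intro m
        induction m with
        | nil => rfl
        | cons a m ih =>
            simp only [List.map_cons, List.sum_cons, LinearMap.add_apply, ih]
            rfl
      rw [this]
      conv_lhs => rw [← List.ofFn_get l, List.map_ofFn, List.sum_ofFn]
      rfl
end

section
/- Let R ⊇ S be a split ring extension with bimodule projection E: R → S, viewed as an idempotent in U = End_{S-S}(R). Then the corner ring EUE is isomorphic to Z(S), the center of S. -/
/-- The corner `EUE` of `U = End_{S-S}(R)` at the idempotent `E`. -/
def cornerSub {R : Type*} [Ring R] (S : Subring R) (E : Module.End ℤ R)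
    (hE : E ∈ bimodEnd S) :
    NonUnitalSubring (Module.End ℤ R) where
  carrier := {x | ∃ α ∈ bimodEnd S, x = E * α * E}
  zero_mem' := ⟨0, (bimodEnd S).zero_mem, by simp⟩
  add_mem' := by
    rintro x y ⟨α, hα, rfl⟩ ⟨β, hβ, rfl⟩
    exact ⟨α + β, (bimodEnd S).add_mem hα hβ, by noncomm_ring⟩
  neg_mem' := by
    rintro x ⟨α, hα, rfl⟩
    exact ⟨-α, (bimodEnd S).neg_mem hα, by noncomm_ring⟩
  mul_mem' := by
    rintro x y ⟨α, hα, rfl⟩ ⟨β, hβ, rfl⟩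
    exact ⟨α * E * E * β,
      (bimodEnd S).mul_mem ((bimodEnd S).mul_mem ((bimodEnd S).mul_mem hα hE) hE) hβ,
      by noncomm_ring⟩

/-- For a split ring extension `R ⊇ S` with bimodule projection
`E : R → S` viewed as an idempotent of `U = End_{S-S}(R)`, the corner ring `EUE`
is isomorphic to `Z(S)` via `EαE ↦ E(α(1))`. -/
theorem corner_iso_center_of_split {R : Type*} [Ring R] (S : Subring R)
    (E : Module.End ℤ R) (hE : E ∈ bimodEnd S) (hproj : ∀ r : R, E r ∈ S)
    (hid : ∀ s ∈ S, E s = s) :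
    ∃ φ : cornerSub S E hE ≃+* Subring.center S,
      ∀ x : cornerSub S E hE, ((φ x : S) : R) = (x : Module.End ℤ R) 1 := by
  classical
  have hE1 : E 1 = 1 := hid 1 S.one_mem
  have hEE : ∀ r : R, E (E r) = E r := fun r => hid _ (hproj r)
  have hmemS : ∀ x : cornerSub S E hE, (x : Module.End ℤ R) 1 ∈ S := by
    rintro ⟨x, α, hα, rfl⟩
    simpa [Module.End.mul_apply] using hproj (α (E 1))
  have hbimod : ∀ x : cornerSub S E hE, (x : Module.End ℤ R) ∈ bimodEnd S := by
    rintro ⟨x, α, hα, rfl⟩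
    exact (bimodEnd S).mul_mem ((bimodEnd S).mul_mem hE hα) hE
  have key : ∀ x : cornerSub S E hE, ∀ r : R,
      (x : Module.End ℤ R) r = (x : Module.End ℤ R) 1 * E r := by
    rintro ⟨x, α, hα, rfl⟩ r
    simp only [Module.End.mul_apply]
    have h1 : α (E r) = α 1 * E r := by
      have := (hα _ (hproj r) 1).2
      simpa using this
    rw [h1, (hE _ (hproj r) (α 1)).2, hE1]
  have hcent : ∀ x : cornerSub S E hE, ∀ s ∈ S,
      s * (x : Module.End ℤ R) 1 = (x : Module.End ℤ R) 1 * s := by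
    intro x s hs
    have h1 := (hbimod x s hs 1).1
    rw [mul_one] at h1
    have h2 := key x s
    rw [hid s hs] at h2
    rw [← h1, h2]
  -- the forward map
  set toF : cornerSub S E hE → Subring.center S := fun x =>
    ⟨⟨(x : Module.End ℤ R) 1, hmemS x⟩,
      Subring.mem_center_iff.mpr (fun g => Subtype.ext (hcent x g g.2))⟩ with htoF
  -- the inverse map ingredients
  have hz : ∀ z : Subring.center S, ∀ s ∈ S, ((z : S) : R) * s = s * ((z : S) : R) := by
    intro z s hs
    have := Subring.mem_center_iff.mp z.2 ⟨s, hs⟩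
    exact (congrArg Subtype.val this).symm
  have hαbimod : ∀ z : Subring.center S,
      (LinearMap.mulLeft ℤ ((z : S) : R)) * E ∈ bimodEnd S := by
    intro z s hs r
    constructor
    · show ((z : S) : R) * E (s * r) = s * (((z : S) : R) * E r)
      rw [(hE s hs r).1, ← mul_assoc, ← mul_assoc, hz z s hs]
    · show ((z : S) : R) * E (r * s) = ((z : S) : R) * E r * s
      rw [(hE s hs r).2, mul_assoc]
  have hinvmem : ∀ z : Subring.center S,
      (LinearMap.mulLeft ℤ ((z : S) : R)) * E ∈ cornerSub S E hE := by
    intro z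
    refine ⟨(LinearMap.mulLeft ℤ ((z : S) : R)) * E, hαbimod z, ?_⟩
    ext r
    show ((z : S) : R) * E r = E (((z : S) : R) * E (E r))
    rw [(hE _ (z : S).2 (E (E r))).1, hEE, hEE]
  set invF : Subring.center S → cornerSub S E hE := fun z =>
    ⟨(LinearMap.mulLeft ℤ ((z : S) : R)) * E, hinvmem z⟩ with hinvF
  refine ⟨{ toFun := toF, invFun := invF, left_inv := ?_, right_inv := ?_, map_mul' := ?_, map_add' := ?_ }, fun x => rfl⟩
  · intro x
    apply Subtype.ext
    ext r
    show ((x : Module.End ℤ R) 1) * E r = (x : Module.End ℤ R) r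
    exact (key x r).symm
  · intro z
    apply Subtype.ext
    apply Subtype.ext
    show ((z : S) : R) * E 1 = ((z : S) : R)
    rw [hE1, mul_one]
  · intro x y
    apply Subtype.ext
    apply Subtype.ext
    show ((x : Module.End ℤ R) * (y : Module.End ℤ R)) 1
        = (x : Module.End ℤ R) 1 * (y : Module.End ℤ R) 1
    rw [Module.End.mul_apply, key x ((y : Module.End ℤ R) 1), hid _ (hmemS y)]
  · intro x y
    apply Subtype.ext
    apply Subtype.ext
    show ((x : Module.End ℤ R) + (y : Module.End ℤ R)) 1
        = (x : Module.End ℤ R) 1 + (y : Module.End ℤ R) 1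
    simp
end
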